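/- Let q ≥ 2, ε ∈ (0,1), and let G be a finite connected bipartite (q+1)-regular graph on Q vertices whose adjacency-matrix eigenvalues other than ±(q+1) all have absolute value at most √q. Then for every subset A of the vertices of G with |A| < (1−ε)Q/2: |E(A,Ā)| ≥ ((1+ε)/2)·(q+1−√q)·|A|. -/

import Mathlib

open scoped Classical
open Matrix
open scoped RealInnerProductSpace

open Finset in
/-- An eigenvector for the top eigenvalue (the common degree) of a connected regular graph
is constant. -/
lemma eigen_top_constant {V : Type} [Fintype V] [DecidableEq V]
    (G : SimpleGraph V) [DecidableRel G.Adj] (hconn : G.Connected)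
    (d : ℝ) (hreg : ∀ v : V, (G.degree v : ℝ) = d)
    (v : V → ℝ) (hv : G.adjMatrix ℝ *ᵥ v = d • v) :
    ∀ i j : V, v i = v j := by
  have hL : G.lapMatrix ℝ *ᵥ v = 0 := by
    funext i
    have h1 : (G.adjMatrix ℝ *ᵥ v) i = d * v i := by rw [hv]; simp
    rw [SimpleGraph.adjMatrix_mulVec_apply] at h1
    simp only [SimpleGraph.lapMatrix_mulVec_apply, Pi.zero_apply, h1, hreg i]
    ring
  have h0 : Matrix.toLinearMap₂' ℝ (G.lapMatrix ℝ) v v = 0 := by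
    rw [Matrix.toLinearMap₂'_apply', hL, dotProduct_zero]
  have := (SimpleGraph.lapMatrix_toLinearMap₂'_apply'_eq_zero_iff_forall_reachable G v).mp h0
  intro i j
  exact this i j (hconn.preconnected i j)

open Finset in
/-- Spectral bound: for a connected `d`-regular graph whose eigenvalues other than `±d`
are at most `lam` in absolute value, the adjacency quadratic form on vectors summing to
zero is at most `lam` times the squared norm. -/
lemma quad_form_le {V : Type} [Fintype V] [DecidableEq V]
    (G : SimpleGraph V) [DecidableRel G.Adj] (hconn : G.Connected)
    (d lam : ℝ) (hd : 0 ≤ d) (hlam : 0 ≤ lam)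
    (hreg : ∀ v : V, (G.degree v : ℝ) = d)
    (heig : ∀ mu : ℝ, (∃ f : V → ℝ, f ≠ 0 ∧ G.adjMatrix ℝ *ᵥ f = mu • f) →
      mu = d ∨ mu = -d ∨ |mu| ≤ lam)
    (f : V → ℝ) (hsum : ∑ v, f v = 0) :
    f ⬝ᵥ (G.adjMatrix ℝ *ᵥ f) ≤ lam * (f ⬝ᵥ f) := by
  set M : Matrix V V ℝ := G.adjMatrix ℝ with hM
  have hH : M.IsHermitian := by
    rw [Matrix.IsHermitian, conjTranspose_eq_transpose_of_trivial]
    exact G.isSymm_adjMatrix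
  have hMt : Mᵀ = M := G.isSymm_adjMatrix
  set b := hH.eigenvectorBasis with hb
  set μ := hH.eigenvalues with hμ
  have hinner : ∀ x y : EuclideanSpace ℝ V, ⟪x, y⟫ = dotProduct (x : V → ℝ) (y : V → ℝ) := by
    intro x y
    simp [PiLp.inner_apply, dotProduct, mul_comm]
  have hbeig : ∀ i : V, M *ᵥ (b i : V → ℝ) = μ i • (b i : V → ℝ) := fun i =>
    hH.mulVec_eigenvectorBasis i
  have hbne : ∀ i : V, ((b i : V → ℝ)) ≠ 0 := by
    intro i h
    exact b.orthonormal.ne_zero i (by ext j; exact congrFun h j)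
  have hdotM : ∀ (i : V) (y : V → ℝ), dotProduct (b i : V → ℝ) (M *ᵥ y)
      = μ i * dotProduct (b i : V → ℝ) y := by
    intro i y
    rw [dotProduct_mulVec, ← Matrix.mulVec_transpose, hMt, hbeig i, smul_dotProduct, smul_eq_mul]
  have hexp : f ⬝ᵥ (M *ᵥ f) = ∑ i, μ i * (b i ⬝ᵥ f * (b i ⬝ᵥ f)) := by
    have h1 := b.sum_inner_mul_inner (WithLp.toLp 2 f) (WithLp.toLp 2 (M *ᵥ f))
    rw [hinner (WithLp.toLp 2 f) (WithLp.toLp 2 (M *ᵥ f))] at h1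
    simp only [WithLp.ofLp_toLp] at h1
    rw [← h1]
    refine Finset.sum_congr rfl fun i _ => ?_
    rw [hinner (WithLp.toLp 2 f) (b i), hinner (b i) (WithLp.toLp 2 (M *ᵥ f))]
    simp only [WithLp.ofLp_toLp]
    rw [hdotM i f, dotProduct_comm f]
    ring
  have hpars : ∑ i, (b i ⬝ᵥ f) * (b i ⬝ᵥ f) = f ⬝ᵥ f := by
    have h1 := b.sum_inner_mul_inner (WithLp.toLp 2 f) (WithLp.toLp 2 f)
    rw [hinner (WithLp.toLp 2 f) (WithLp.toLp 2 f)] at h1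
    simp only [WithLp.ofLp_toLp] at h1
    rw [← h1]
    refine Finset.sum_congr rfl fun i _ => ?_
    rw [hinner (WithLp.toLp 2 f) (b i), hinner (b i) (WithLp.toLp 2 f)]
    simp only [WithLp.ofLp_toLp]
    rw [dotProduct_comm f]
  rw [hexp, ← hpars, Finset.mul_sum]
  apply Finset.sum_le_sum
  intro i _
  rcases heig (μ i) ⟨b i, hbne i, hbeig i⟩ with h | h | h
  · have hconst := eigen_top_constant G hconn d hreg (b i) (by rw [← h]; exact hbeig i)
    obtain ⟨v0⟩ := hconn.nonempty
    have hz : (b i ⬝ᵥ f : ℝ) = 0 := by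
      calc (b i ⬝ᵥ f : ℝ) = ∑ j, b i j * f j := rfl
        _ = ∑ j, b i v0 * f j :=
            Finset.sum_congr rfl (fun j _ => by rw [hconst j v0])
        _ = b i v0 * ∑ j, f j := by rw [Finset.mul_sum]
        _ = 0 := by rw [hsum, mul_zero]
    rw [hz]
    simp
  · exact mul_le_mul_of_nonneg_right (by rw [h]; linarith) (mul_self_nonneg _)
  · exact mul_le_mul_of_nonneg_right (le_trans (le_abs_self _) h) (mul_self_nonneg _)

set_option maxHeartbeats 1000000 in
/-- Let `q ≥ 2`, `ε ∈ (0,1)`, and let `G` be a finite connected bipartite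
`(q+1)`-regular graph on `Q` vertices whose adjacency eigenvalues other than `±(q+1)` have
absolute value at most `√q`.  Then every vertex subset `A` with `|A| < (1−ε)Q/2` satisfies
`|E(A,Ā)| ≥ ((1+ε)/2)(q+1−√q)|A|`. -/
theorem bipartite_expander_edge_boundary_small_sets
    {V : Type} [Fintype V] [DecidableEq V] (q Q : ℕ) (hq : 2 ≤ q)
    (ε : ℝ) (hε0 : 0 < ε) (hε1 : ε < 1)
    (G : SimpleGraph V) (hconn : G.Connected) (hcard : Fintype.card V = Q)
    (hbip : ∃ C : V → Bool, ∀ u w, G.Adj u w → C u ≠ C w)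
    (hreg : ∀ v : V, G.degree v = q + 1)
    (heig : ∀ mu : ℝ, (∃ f : V → ℝ, f ≠ 0 ∧ G.adjMatrix ℝ *ᵥ f = mu • f) →
      mu = (q : ℝ) + 1 ∨ mu = -((q : ℝ) + 1) ∨ |mu| ≤ Real.sqrt q)
    (A : Finset V) (hA : (A.card : ℝ) < (1 - ε) * (Q : ℝ) / 2) :
    ((G.edgeFinset.filter fun e => ∃ u ∈ e, ∃ w ∈ e, u ∈ A ∧ w ∉ A).card : ℝ) ≥
      ((1 + ε) / 2) * ((q : ℝ) + 1 - Real.sqrt q) * (A.card : ℝ) := by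
  classical
  set M : Matrix V V ℝ := G.adjMatrix ℝ with hM
  set d : ℝ := (q : ℝ) + 1 with hd
  set l : ℝ := Real.sqrt q with hl
  set n : ℝ := (Q : ℝ) with hn
  set a : ℝ := (A.card : ℝ) with ha
  have ha0 : 0 ≤ a := Nat.cast_nonneg _
  have hn0 : 0 < n := by
    by_contra h
    push_neg at h
    nlinarith
  have hd0 : (0:ℝ) < d := by positivity
  have hl0 : (0:ℝ) ≤ l := Real.sqrt_nonneg _
  have hld : l ≤ d := by
    have h1 : l ^ 2 = (q : ℝ) := Real.sq_sqrt (by positivity)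
    nlinarith
  have hregR : ∀ v : V, (G.degree v : ℝ) = d := by
    intro v; rw [hreg v]; push_cast; rfl
  -- row sums of the adjacency matrix
  have hrow : ∀ u : V, ∑ w : V, M u w = d := by
    intro u
    rw [← hregR u, SimpleGraph.degree_eq_sum_if_adj]
    apply Finset.sum_congr rfl
    intro w _
    simp [hM]
  have hcol : ∀ w : V, ∑ u : V, M u w = d := by
    intro w
    rw [← hrow w]
    apply Finset.sum_congr rfl
    intro u _
    simp only [hM, SimpleGraph.adjMatrix_apply]
    rw [SimpleGraph.adj_comm]
  set S : ℝ := ∑ u ∈ A, ∑ w ∈ A, M u w with hS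
  -- counting: the edge boundary equals the cross sum
  have hcount : ((G.edgeFinset.filter fun e => ∃ u ∈ e, ∃ w ∈ e, u ∈ A ∧ w ∉ A).card : ℝ)
      = ∑ u ∈ A, ∑ w ∈ Aᶜ, M u w := by
    set P : Finset (V × V) :=
      Finset.univ.filter (fun p => p.1 ∈ A ∧ p.2 ∉ A ∧ G.Adj p.1 p.2) with hP
    have hbij : P.card = (G.edgeFinset.filter fun e => ∃ u ∈ e, ∃ w ∈ e, u ∈ A ∧ w ∉ A).card := by
      apply Finset.card_bij (fun (p : V × V) _ => Sym2.mk p.1 p.2)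
      · rintro ⟨u, w⟩ hp
        simp only [hP, Finset.mem_filter, Finset.mem_univ, true_and] at hp
        obtain ⟨h1, h2, h3⟩ := hp
        simp only [Finset.mem_filter, SimpleGraph.mem_edgeFinset]
        refine ⟨G.mem_edgeSet.mpr h3, u, ?_, w, ?_, h1, h2⟩
        · exact Sym2.mem_mk_left _ _
        · exact Sym2.mem_mk_right _ _
      · rintro ⟨u, w⟩ hp ⟨u', w'⟩ hp' h
        simp only [hP, Finset.mem_filter, Finset.mem_univ, true_and] at hp hp'
        rw [Sym2.mk_eq_mk_iff] at h
        rcases h with h | h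
        · exact h
        · simp only [Prod.swap_prod_mk, Prod.mk.injEq] at h
          exact absurd (h.1 ▸ hp.1) hp'.2.1
      · intro e he
        simp only [Finset.mem_filter, SimpleGraph.mem_edgeFinset] at he
        obtain ⟨hee, u, hu, w, hw, huA, hwA⟩ := he
        induction e with
        | h x y =>
          rw [Sym2.mem_iff] at hu hw
          have hadj : G.Adj x y := hee
          -- u and w are among {x, y}, u ∈ A, w ∉ A
          rcases hu with rfl | rfl <;> rcases hw with rfl | rfl
          · exact absurd huA hwA
          · exact ⟨(u, w), by simp [hP, huA, hwA, hadj], rfl⟩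
          · refine ⟨(u, w), by simp [hP, huA, hwA, hadj.symm], ?_⟩
            rw [Sym2.eq_swap]
          · exact absurd huA hwA
    rw [← hbij]
    have hPcard : (P.card : ℝ) = ∑ u ∈ A, ∑ w ∈ Aᶜ, M u w := by
      rw [hP, Finset.card_filter]
      push_cast
      rw [Fintype.sum_prod_type]
      rw [← Finset.sum_filter_add_sum_filter_not Finset.univ (· ∈ A)]
      have h2 : ∀ u ∈ Finset.univ.filter (· ∉ A),
          (∑ w : V, if u ∈ A ∧ w ∉ A ∧ G.Adj u w then (1:ℝ) else 0) = 0 := by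
        intro u hu
        simp only [Finset.mem_filter] at hu
        apply Finset.sum_eq_zero
        intro w _
        simp [hu.2]
      rw [Finset.sum_congr rfl h2, Finset.sum_const_zero, add_zero]
      have hfA : Finset.univ.filter (· ∈ A) = A := by
        ext x; simp
      rw [hfA]
      apply Finset.sum_congr rfl
      intro u hu
      rw [← Finset.sum_filter_add_sum_filter_not Finset.univ (· ∉ A)]
      have h3 : ∀ w ∈ Finset.univ.filter (¬ · ∉ A),
          (if u ∈ A ∧ w ∉ A ∧ G.Adj u w then (1:ℝ) else 0) = 0 := by
        intro w hw
        simp only [Finset.mem_filter] at hw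
        simp [hw.2]
      rw [Finset.sum_congr rfl h3, Finset.sum_const, smul_zero, add_zero]
      have hfAc : Finset.univ.filter (· ∉ A) = Aᶜ := by
        ext x; simp
      rw [hfAc]
      apply Finset.sum_congr rfl
      intro w hw
      simp only [Finset.mem_compl] at hw
      simp [hM, SimpleGraph.adjMatrix_apply, hu, hw]
    exact hPcard
  -- cross sum = d*a - S
  have hcross : ∑ u ∈ A, ∑ w ∈ Aᶜ, M u w = d * a - S := by
    have h1 : ∀ u : V, ∑ w ∈ A, M u w + ∑ w ∈ Aᶜ, M u w = d := by
      intro u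
      rw [Finset.sum_add_sum_compl, hrow u]
    have h2 : ∑ u ∈ A, (∑ w ∈ A, M u w + ∑ w ∈ Aᶜ, M u w) = ∑ u ∈ A, d := by
      apply Finset.sum_congr rfl; intro u _; rw [h1 u]
    rw [Finset.sum_add_distrib] at h2
    rw [Finset.sum_const] at h2
    have : S + ∑ u ∈ A, ∑ w ∈ Aᶜ, M u w = a * d := by
      rw [hS]; rw [h2]; simp [ha, mul_comm]
    linarith
  -- the test vector
  set c : ℝ := a / n with hc
  have hnc : n * c = a := by rw [hc]; field_simp [hn0.ne']
  set g : V → ℝ := fun v => if v ∈ A then 1 else 0 with hg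
  set f : V → ℝ := fun v => g v - c with hf
  have hg_sum : ∑ v, g v = a := by
    simp [hg, ha, Finset.sum_ite_mem]
  have hsum : ∑ v, f v = 0 := by
    simp only [hf, Finset.sum_sub_distrib, hg_sum, Finset.sum_const, Finset.card_univ, hcard,
      nsmul_eq_mul]
    rw [← hn, hnc]
    ring
  -- f ⬝ᵥ f
  have hff : f ⬝ᵥ f = a - c * a := by
    have h1 : ∀ v : V, f v * f v = g v - 2 * c * g v + c ^ 2 := by
      intro v
      by_cases hv : v ∈ A <;> simp [hf, hg, hv] <;> ring
    calc f ⬝ᵥ f = ∑ v, (g v - 2 * c * g v + c ^ 2) := Finset.sum_congr rfl (fun v _ => h1 v)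
      _ = (∑ v, g v) - 2 * c * (∑ v, g v) + n * c ^ 2 := by
          rw [Finset.sum_add_distrib, Finset.sum_sub_distrib, ← Finset.mul_sum,
            Finset.sum_const, Finset.card_univ, hcard, nsmul_eq_mul, ← hn]
      _ = a - c * a := by
          rw [hg_sum]
          have h9 : n * c ^ 2 = c * a := by rw [← hnc]; ring
          linarith
  -- (M *ᵥ g) facts
  have hMg : ∀ v : V, (M *ᵥ g) v = ∑ w ∈ A, M v w := by
    intro v
    simp only [mulVec, dotProduct, hg, mul_ite, mul_one, mul_zero]
    rw [Finset.sum_ite_mem, Finset.univ_inter]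
  have hsum_Mg : ∑ v, (M *ᵥ g) v = d * a := by
    calc ∑ v, (M *ᵥ g) v = ∑ v, ∑ w ∈ A, M v w := Finset.sum_congr rfl (fun v _ => hMg v)
      _ = ∑ w ∈ A, ∑ v, M v w := Finset.sum_comm
      _ = ∑ w ∈ A, d := Finset.sum_congr rfl (fun w _ => hcol w)
      _ = a * d := by rw [Finset.sum_const]; simp [ha, mul_comm]
      _ = d * a := mul_comm _ _
  have hgMg : ∑ v, g v * (M *ᵥ g) v = S := by
    have h1 : ∑ v, g v * (M *ᵥ g) v = ∑ v ∈ A, (M *ᵥ g) v := by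
      simp only [hg, ite_mul, one_mul, zero_mul]
      rw [Finset.sum_ite_mem, Finset.univ_inter]
    rw [h1, hS]
    exact Finset.sum_congr rfl (fun v _ => hMg v)
  -- f ⬝ᵥ (M *ᵥ f)
  have hMf : ∀ v : V, (M *ᵥ f) v = (M *ᵥ g) v - c * d := by
    intro v
    simp only [mulVec, dotProduct, hf]
    rw [Finset.sum_congr rfl (fun w _ => mul_sub (M v w) (g w) c)]
    rw [Finset.sum_sub_distrib, ← Finset.sum_mul, hrow v]
    ring_nf
  have hfMf : f ⬝ᵥ (M *ᵥ f) = S - c * d * a := by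
    calc f ⬝ᵥ (M *ᵥ f) = ∑ v, (g v - c) * ((M *ᵥ g) v - c * d) := by
          apply Finset.sum_congr rfl
          intro v _
          rw [hMf v]
      _ = ∑ v, (g v * (M *ᵥ g) v - c * d * g v - c * (M *ᵥ g) v + c * (c * d)) := by
          apply Finset.sum_congr rfl; intro v _; ring
      _ = S - c * d * a - c * (d * a) + n * (c * (c * d)) := by
          rw [Finset.sum_add_distrib, Finset.sum_sub_distrib, Finset.sum_sub_distrib,
            hgMg, ← Finset.mul_sum, ← Finset.mul_sum, hg_sum, hsum_Mg,
            Finset.sum_const, Finset.card_univ, hcard, nsmul_eq_mul, ← hn]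
      _ = S - c * d * a := by
          have h9 : n * (c * (c * d)) = c * (d * a) := by rw [← hnc]; ring
          linarith
  -- spectral bound
  have hspec : f ⬝ᵥ (M *ᵥ f) ≤ l * (f ⬝ᵥ f) :=
    quad_form_le G hconn d l (le_of_lt hd0) hl0 hregR heig f hsum
  rw [hfMf, hff] at hspec
  -- conclude
  rw [ge_iff_le, hcount, hcross]
  have hcA : c < (1 - ε) / 2 := by
    rw [hc, div_lt_iff₀ hn0]
    calc a < (1 - ε) * n / 2 := hA
      _ = (1 - ε) / 2 * n := by ring
  have hkey : 0 ≤ a * (d - l) * ((1 - ε) / 2 - c) :=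
    mul_nonneg (mul_nonneg ha0 (by linarith)) (by linarith)
  clear_value M d l n a S c g f
  nlinarith [hkey, hspec]
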